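/- Let ζ>0 and let ρ be the measure on [0,1] with density ζλ^{ζ-1} with respect to Lebesgue measure (so ρ((0,λ]) = λ^ζ). Then for every n ∈ ℕ, the infimum over all real polynomials q with deg q ≤ n and q(0)=1 of (1/2)∫_0^1 q(λ)² ζλ^{ζ-1} dλ equals Γ(ζ+1)²·(n!)² / (2·Γ(ζ+n+1)²). -/

import Mathlib

open MeasureTheory Set Polynomial

section CGAux
open Finset fwdDiff

lemma iter_fwdDiff_zero {n : ℕ} : Δ_[(1:ℝ)] ^[n] (fun _ => (0:ℝ)) = fun _ => 0 := by
  induction n with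
  | zero => rfl
  | succ n ih => rw [Function.iterate_succ_apply, show Δ_[(1:ℝ)] (fun _ => (0:ℝ)) = fun _ => 0 by
      funext x; simp [fwdDiff], ih]

lemma natDegree_comp_sub (P : ℝ[X]) (m : ℕ) (hP : P.natDegree ≤ m + 1) :
    (P.comp (X + C 1) - P).natDegree ≤ m := by
  have hc : (P.comp (X + C 1)).natDegree = P.natDegree := by
    rw [natDegree_comp, natDegree_X_add_C, mul_one]
  rw [natDegree_le_iff_coeff_eq_zero]
  intro k hk
  rcases lt_or_eq_of_le (Nat.succ_le_of_lt hk) with h | h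
  · rw [coeff_sub, coeff_eq_zero_of_natDegree_lt (by omega),
      coeff_eq_zero_of_natDegree_lt (by omega), sub_zero]
  · -- k = m + 1; if natDegree P < k both coeffs vanish, else k = natDegree P
    rcases lt_or_eq_of_le hP with h2 | h2
    · rw [coeff_sub, coeff_eq_zero_of_natDegree_lt (by omega),
        coeff_eq_zero_of_natDegree_lt (by omega), sub_zero]
    · have h3 : k = P.natDegree := by omega
      have := coeff_comp_degree_mul_degree (p := P) (q := X + C 1)
        (by rw [natDegree_X_add_C]; exact one_ne_zero)
      rw [natDegree_X_add_C, mul_one] at this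
      rw [coeff_sub, h3, this, leadingCoeff_X_add_C, one_pow, mul_one, coeff_natDegree,
        sub_self]

lemma iter_fwdDiff_poly_eq_zero : ∀ (n : ℕ) (P : ℝ[X]), P.natDegree < n →
    Δ_[(1:ℝ)] ^[n] (fun x => P.eval x) = fun _ => 0 := by
  intro n
  induction n with
  | zero => intro P hP; omega
  | succ n ih =>
    intro P hP
    rw [Function.iterate_succ_apply]
    have hD : Δ_[(1:ℝ)] (fun x => P.eval x) = fun x => (P.comp (X + C 1) - P).eval x := by
      funext x; simp [fwdDiff, eval_comp]
    rcases Nat.eq_zero_or_pos n with h0 | h0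
    · subst h0
      have hdeg : P.natDegree = 0 := by omega
      obtain ⟨a, ha⟩ := natDegree_eq_zero.mp hdeg
      have hfa : (fun x : ℝ => P.eval x) = fun _ => a := by funext x; rw [← ha]; simp
      rw [hfa]
      funext x
      simp [fwdDiff]
    · rw [hD, ih _ (by
        have := natDegree_comp_sub P (n - 1) (by omega); omega)]

/-- Lemma A: alternating binomial sum annihilates polynomials of degree < n. -/
lemma alt_sum_poly (n : ℕ) (P : ℝ[X]) (hP : P.natDegree < n) :
    ∑ k ∈ range (n + 1), (-1 : ℝ) ^ k * (n.choose k : ℝ) * P.eval (k : ℝ) = 0 := by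
  have h := fwdDiff_iter_eq_sum_shift (1:ℝ) (fun x => P.eval x) n 0
  rw [iter_fwdDiff_poly_eq_zero n P hP] at h
  have h2 : (0:ℝ) = ∑ k ∈ range (n+1), ((-1:ℝ)^(n-k) * (n.choose k : ℝ)) * P.eval (k:ℝ) := by
    convert h using 2 with k hk
    simp [zsmul_eq_mul]
  have h3 : ∑ k ∈ range (n + 1), (-1 : ℝ) ^ k * (n.choose k : ℝ) * P.eval (k : ℝ)
      = (-1:ℝ)^n * ∑ k ∈ range (n+1), ((-1:ℝ)^(n-k) * (n.choose k : ℝ)) * P.eval (k:ℝ) := by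
    rw [Finset.mul_sum]
    refine Finset.sum_congr rfl fun k hk => ?_
    have hkn : k ≤ n := Nat.lt_succ_iff.mp (Finset.mem_range.mp hk)
    have : (-1:ℝ)^n * (-1:ℝ)^(n-k) = (-1:ℝ)^k := by
      rw [← pow_add]
      have : n + (n - k) = 2 * (n - k) + k := by omega
      rw [this, pow_add, pow_mul]
      simp
    rw [← this]; ring
  rw [h3, ← h2, mul_zero]

lemma alt_sum_inv (n : ℕ) : ∀ x : ℝ, 0 < x →
    ∑ k ∈ range (n + 1), (-1 : ℝ) ^ k * (n.choose k : ℝ) / (x + k) =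
      (n.factorial : ℝ) / ∏ k ∈ range (n + 1), (x + k) := by
  induction n with
  | zero => intro x hx; simp
  | succ n ih =>
    intro x hx
    have h1 := ih x hx
    have h2 := ih (x + 1) (by linarith)
    have e2 : ∑ k ∈ range (n+1), ((-1:ℝ)^k * (n.choose (k+1) : ℝ) / (x + (k+1)))
        = 1/x - ∑ k ∈ range (n + 1), (-1 : ℝ) ^ k * (n.choose k : ℝ) / (x + k) := by
      rw [Finset.sum_range_succ' (fun k => (-1 : ℝ) ^ k * (n.choose k : ℝ) / (x + k)) n,
        Finset.sum_range_succ
          (fun k => ((-1:ℝ)^k * (n.choose (k+1) : ℝ) / (x + (k+1)))) n]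
      have hc : ∀ k ∈ range n, ((-1:ℝ)^(k+1) * (n.choose (k+1) : ℝ) / (x + ((k:ℕ)+1:ℕ)))
          = -((-1:ℝ)^k * (n.choose (k+1) : ℝ) / (x + ((k:ℝ)+1))) := by
        intro k _; push_cast; ring
      rw [Finset.sum_congr rfl hc, Finset.sum_neg_distrib, Nat.choose_succ_self]
      simp
    have e1 : ∑ k ∈ range (n + 1 + 1), (-1 : ℝ) ^ k * ((n+1).choose k : ℝ) / (x + k)
        = 1/x - (∑ k ∈ range (n+1), ((-1:ℝ)^k * (n.choose k : ℝ) / ((x+1) + k)))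
          - ∑ k ∈ range (n+1), ((-1:ℝ)^k * (n.choose (k+1) : ℝ) / (x + (k+1))) := by
      rw [Finset.sum_range_succ' (fun k => (-1 : ℝ) ^ k * ((n+1).choose k : ℝ) / (x + k)) (n+1)]
      have hterm : ∀ k ∈ range (n+1),
          ((-1 : ℝ) ^ (k+1) * ((n+1).choose (k+1) : ℝ) / (x + ((k:ℕ)+1 : ℕ)))
          = (- ((-1:ℝ)^k * (n.choose k : ℝ) / ((x+1) + k)))
            - ((-1:ℝ)^k * (n.choose (k+1) : ℝ) / (x + (k+1))) := by
        intro k _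
        rw [Nat.choose_succ_succ]
        push_cast
        rw [show x + ((k:ℝ) + 1) = x + 1 + k by ring]
        ring
      rw [Finset.sum_congr rfl hterm, Finset.sum_sub_distrib, Finset.sum_neg_distrib]
      simp
      ring
    rw [e1, e2, h1, h2]
    set PA := ∏ k ∈ range (n + 1), (x + (k:ℝ)) with hPA
    set PB := ∏ k ∈ range (n + 1), (x + 1 + (k:ℝ)) with hPB
    set PC := ∏ k ∈ range (n + 1 + 1), (x + (k:ℝ)) with hPC
    have hPApos : 0 < PA := Finset.prod_pos fun k _ => by positivity
    have hPBpos : 0 < PB := Finset.prod_pos fun k _ => by positivity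
    have hPCpos : 0 < PC := Finset.prod_pos fun k _ => by positivity
    have hC1 : PC = x * PB := by
      rw [hPC, Finset.prod_range_succ' (fun k => (x + (k:ℝ))) (n+1)]
      have : ∏ k ∈ range (n+1), (x + ((k:ℕ)+1 : ℕ):ℝ) = PB := by
        rw [hPB]; exact Finset.prod_congr rfl fun k _ => by push_cast; ring
      rw [this]
      push_cast
      ring
    have hC2 : PC = PA * (x + (n+1)) := by
      rw [hPC, Finset.prod_range_succ, ← hPA]
      push_cast
      ring
    have hstep : (1:ℝ)/x - (n.factorial:ℝ)/PB - ((1:ℝ)/x - (n.factorial:ℝ)/PA)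
        = (n.factorial:ℝ)/PA - (n.factorial:ℝ)/PB := by ring
    rw [hstep, div_sub_div _ _ hPApos.ne' hPBpos.ne',
      div_eq_div_iff (by positivity) hPCpos.ne']
    push_cast [Nat.factorial_succ]
    linear_combination ((n.factorial:ℝ) * PB) * hC2 - ((n.factorial:ℝ) * PA) * hC1

lemma rpow_integrableOn (r : ℝ) (hr : -1 < r) :
    IntegrableOn (fun l : ℝ => l ^ r) (Ioc (0:ℝ) 1) := by
  have := intervalIntegral.intervalIntegrable_rpow' (a := 0) (b := 1) hr
  rwa [intervalIntegrable_iff_integrableOn_Ioc_of_le (by norm_num)] at this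

lemma rpow_integral (r : ℝ) (hr : -1 < r) :
    ∫ l in Ioc (0:ℝ) 1, l ^ r = 1 / (r + 1) := by
  rw [← intervalIntegral.integral_of_le (by norm_num : (0:ℝ) ≤ 1)]
  rw [integral_rpow (Or.inl hr)]
  rw [Real.one_rpow, Real.zero_rpow (by linarith), one_div, sub_zero]
  norm_num

lemma mono_eqOn (ζ : ℝ) (a : ℝ) (m : ℕ) :
    EqOn (fun l : ℝ => (a * ζ) * l ^ (ζ + m - 1))
      (fun l : ℝ => a * l ^ m * (ζ * l ^ (ζ - 1))) (Ioc (0:ℝ) 1) := by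
  intro l hl
  have hl0 : 0 < l := hl.1
  simp only
  rw [show ζ + (m:ℝ) - 1 = (m:ℝ) + (ζ - 1) by ring, Real.rpow_add hl0,
    Real.rpow_natCast l m]
  ring

lemma expo_gt (ζ : ℝ) (hζ : 0 < ζ) (m : ℕ) : (-1:ℝ) < ζ + m - 1 := by
  have : (0:ℝ) ≤ (m:ℝ) := Nat.cast_nonneg m
  linarith

lemma mono_integrableOn (ζ : ℝ) (hζ : 0 < ζ) (a : ℝ) (m : ℕ) :
    IntegrableOn (fun l : ℝ => a * l ^ m * (ζ * l ^ (ζ - 1))) (Ioc (0:ℝ) 1) := by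
  have h0 := rpow_integrableOn (ζ + m - 1) (expo_gt ζ hζ m)
  have h : IntegrableOn (fun l : ℝ => (a * ζ) * l ^ (ζ + m - 1)) (Ioc (0:ℝ) 1) :=
    Integrable.const_mul h0 (a * ζ)
  exact h.congr_fun (mono_eqOn ζ a m) measurableSet_Ioc

lemma mono_integral (ζ : ℝ) (hζ : 0 < ζ) (a : ℝ) (m : ℕ) :
    ∫ l in Ioc (0:ℝ) 1, a * l ^ m * (ζ * l ^ (ζ - 1)) = a * (ζ / (ζ + m)) := by
  rw [setIntegral_congr_fun measurableSet_Ioc (mono_eqOn ζ a m).symm, integral_const_mul,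
    rpow_integral _ (expo_gt ζ hζ m), show ζ + (m:ℝ) - 1 + 1 = ζ + m by ring]
  ring

lemma poly_weight_eq (ζ : ℝ) (p : ℝ[X]) (d : ℕ) (hd : p.natDegree < d + 1) :
    (fun l : ℝ => p.eval l * (ζ * l ^ (ζ - 1)))
      = fun l : ℝ => ∑ k ∈ range (d + 1), p.coeff k * l ^ k * (ζ * l ^ (ζ - 1)) := by
  funext l
  rw [eval_eq_sum_range' hd, Finset.sum_mul]

lemma poly_integrableOn (ζ : ℝ) (hζ : 0 < ζ) (p : ℝ[X]) :
    IntegrableOn (fun l : ℝ => p.eval l * (ζ * l ^ (ζ - 1))) (Ioc (0:ℝ) 1) := by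
  rw [poly_weight_eq ζ p p.natDegree (Nat.lt_succ_self _)]
  exact integrable_finset_sum _ fun k _ => mono_integrableOn ζ hζ (p.coeff k) k

lemma poly_integral (ζ : ℝ) (hζ : 0 < ζ) (p : ℝ[X]) (d : ℕ) (hd : p.natDegree < d + 1) :
    ∫ l in Ioc (0:ℝ) 1, p.eval l * (ζ * l ^ (ζ - 1))
      = ∑ k ∈ range (d + 1), p.coeff k * (ζ / (ζ + k)) := by
  rw [poly_weight_eq ζ p d hd,
    integral_finset_sum _ fun k _ => mono_integrableOn ζ hζ (p.coeff k) k]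
  exact Finset.sum_congr rfl fun k _ => mono_integral ζ hζ (p.coeff k) k

lemma Jint_add (ζ : ℝ) (hζ : 0 < ζ) (p q : ℝ[X]) :
    ∫ l in Ioc (0:ℝ) 1, (p + q).eval l * (ζ * l ^ (ζ - 1))
      = (∫ l in Ioc (0:ℝ) 1, p.eval l * (ζ * l ^ (ζ - 1)))
        + ∫ l in Ioc (0:ℝ) 1, q.eval l * (ζ * l ^ (ζ - 1)) := by
  rw [← integral_add (poly_integrableOn ζ hζ p) (poly_integrableOn ζ hζ q)]
  simp [add_mul]

lemma Jint_nonneg_sq (ζ : ℝ) (hζ : 0 < ζ) (p : ℝ[X]) :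
    0 ≤ ∫ l in Ioc (0:ℝ) 1, (p ^ 2).eval l * (ζ * l ^ (ζ - 1)) := by
  refine setIntegral_nonneg measurableSet_Ioc fun l hl => ?_
  have hl0 : 0 < l := hl.1
  have : 0 < l ^ (ζ - 1) := Real.rpow_pos_of_pos hl0 _
  rw [eval_pow]
  positivity

noncomputable def Dprod (ζ : ℝ) (n : ℕ) : ℝ := ∏ i ∈ range n, (ζ + i + 1)

noncomputable def ccoef (ζ : ℝ) (n : ℕ) (k : ℕ) : ℝ :=
  (-1)^k * (n.choose k : ℝ) * (∏ i ∈ range n, (ζ + k + i + 1)) / Dprod ζ n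

lemma Dprod_pos {ζ : ℝ} (hζ : 0 < ζ) (n : ℕ) : 0 < Dprod ζ n :=
  Finset.prod_pos fun i _ => by positivity

lemma ccoef_zero {ζ : ℝ} (hζ : 0 < ζ) (n : ℕ) : ccoef ζ n 0 = 1 := by
  rw [ccoef]
  have h : (∏ i ∈ range n, (ζ + (0:ℕ) + i + 1)) = Dprod ζ n := by
    rw [Dprod]; exact Finset.prod_congr rfl fun i _ => by push_cast; ring
  rw [h]
  have := (Dprod_pos hζ n).ne'
  field_simp
  simp

/-- orthogonality sums -/
lemma key_ortho {ζ : ℝ} (hζ : 0 < ζ) (n : ℕ) (j : ℕ) (hj1 : 1 ≤ j) (hjn : j ≤ n) :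
    ∑ k ∈ range (n + 1), ccoef ζ n k * (ζ / (ζ + k + j)) = 0 := by
  have hn : 1 ≤ n := le_trans hj1 hjn
  set P : ℝ[X] := ∏ i ∈ (range n).erase (j-1), (X + C (ζ + i + 1)) with hP
  have hmem : j - 1 ∈ range n := by
    rw [Finset.mem_range]; omega
  have hfact : ∀ k : ℕ, (∏ i ∈ range n, (ζ + k + i + 1)) = (ζ + k + j) * P.eval (k:ℝ) := by
    intro k
    rw [← Finset.mul_prod_erase (range n) _ hmem, hP]
    have h1 : ζ + (k:ℝ) + ((j-1:ℕ):ℝ) + 1 = ζ + k + j := by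
      have : ((j-1:ℕ):ℝ) = (j:ℝ) - 1 := by
        push_cast [Nat.cast_sub hj1]; ring
      rw [this]; ring
    rw [h1]
    congr 1
    rw [Polynomial.eval_prod]
    exact Finset.prod_congr rfl fun i _ => by simp; ring
  have hdeg : P.natDegree < n := by
    rw [hP, Polynomial.natDegree_prod _ _ (fun i _ => X_add_C_ne_zero _)]
    · rw [Finset.sum_congr rfl fun i _ => natDegree_X_add_C _]
      rw [Finset.sum_const, Finset.card_erase_of_mem hmem, Finset.card_range, smul_eq_mul,
        mul_one]
      omega
  have := alt_sum_poly n P hdeg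
  have hterm : ∀ k ∈ range (n+1), ccoef ζ n k * (ζ / (ζ + k + j))
      = (ζ / Dprod ζ n) * ((-1:ℝ)^k * (n.choose k : ℝ) * P.eval (k:ℝ)) := by
    intro k _
    rw [ccoef, hfact k]
    have hkj : ζ + (k:ℝ) + (j:ℝ) ≠ 0 := by positivity
    have hD := (Dprod_pos hζ n).ne'
    field_simp
  rw [Finset.sum_congr rfl hterm, ← Finset.mul_sum, this, mul_zero]

/-- value sum -/
lemma key_value {ζ : ℝ} (hζ : 0 < ζ) (n : ℕ) :
    ∑ k ∈ range (n + 1), ccoef ζ n k * (ζ / (ζ + k))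
      = ((n.factorial : ℝ) / Dprod ζ n)^2 := by
  rcases Nat.eq_zero_or_pos n with h0 | hn
  · subst h0
    simp [ccoef, Dprod]
    simp [hζ.ne']
  · set W : ℝ[X] := ∏ i ∈ range n, (X + C (ζ + i + 1)) with hW
    have hWeval : ∀ k : ℕ, W.eval (k:ℝ) = ∏ i ∈ range n, (ζ + k + i + 1) := by
      intro k
      rw [hW, Polynomial.eval_prod]
      exact Finset.prod_congr rfl fun i _ => by simp; ring
    have hroot : (W - C ((n.factorial : ℝ))).IsRoot (-ζ) := by
      rw [Polynomial.IsRoot, eval_sub, eval_C, hW, Polynomial.eval_prod]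
      have : ∀ i ∈ range n, ((X + C (ζ + i + 1)).eval (-ζ)) = (i+1 : ℝ) := by
        intro i _; simp; ring
      rw [Finset.prod_congr rfl this]
      have : ∏ i ∈ range n, ((i:ℝ)+1) = (n.factorial : ℝ) := by
        exact_mod_cast congrArg (fun m : ℕ => (m:ℝ)) (Finset.prod_range_add_one_eq_factorial n)
      rw [this, sub_self]
    obtain ⟨Q, hQ⟩ := (Polynomial.dvd_iff_isRoot.mpr hroot : (X - C (-ζ)) ∣ _)
    have hWdeg : W.natDegree = n := by
      rw [hW, Polynomial.natDegree_prod _ _ (fun i _ => X_add_C_ne_zero _)]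
      rw [Finset.sum_congr rfl fun i _ => natDegree_X_add_C _, Finset.sum_const,
        Finset.card_range, smul_eq_mul, mul_one]
    have hsubdeg : (W - C ((n.factorial : ℝ))).natDegree = n := by
      rw [Polynomial.natDegree_sub_C, hWdeg]
    have hQne : Q ≠ 0 := by
      intro h
      rw [h, mul_zero] at hQ
      rw [hQ] at hsubdeg
      simp at hsubdeg
      omega
    have hQdeg : Q.natDegree < n := by
      have := Polynomial.natDegree_mul (Polynomial.X_sub_C_ne_zero (-ζ)) hQne
      rw [← hQ, hsubdeg, Polynomial.natDegree_X_sub_C] at this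
      omega
    have heval : ∀ k : ℕ, (∏ i ∈ range n, (ζ + k + i + 1))
        = (ζ + k) * Q.eval (k:ℝ) + (n.factorial : ℝ) := by
      intro k
      have := congrArg (Polynomial.eval (k:ℝ)) hQ
      rw [eval_sub, eval_C, eval_mul, eval_sub, eval_X, eval_C, hWeval k] at this
      have h2 : ((k:ℝ) - -ζ) = ζ + k := by ring
      rw [h2] at this
      linarith [this]
    have hterm : ∀ k ∈ range (n+1), ccoef ζ n k * (ζ / (ζ + k))
        = (ζ / Dprod ζ n) * ((-1:ℝ)^k * (n.choose k : ℝ) * Q.eval (k:ℝ))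
          + ((n.factorial : ℝ) * ζ / Dprod ζ n) * ((-1:ℝ)^k * (n.choose k : ℝ) / (ζ + k)) := by
      intro k _
      rw [ccoef, heval k]
      have hk0 : ζ + (k:ℝ) ≠ 0 := by positivity
      have hD := (Dprod_pos hζ n).ne'
      field_simp
    rw [Finset.sum_congr rfl hterm, Finset.sum_add_distrib, ← Finset.mul_sum, ← Finset.mul_sum,
      alt_sum_poly n Q hQdeg, mul_zero, zero_add, alt_sum_inv n ζ hζ]
    have hsplit : ∏ k ∈ range (n + 1), (ζ + k) = ζ * Dprod ζ n := by
      rw [Finset.prod_range_succ' (fun k => (ζ + (k:ℝ))) n, Dprod]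
      have : ∀ i ∈ range n, (ζ + ((i+1:ℕ):ℝ)) = ζ + i + 1 := by
        intro i _; push_cast; ring
      rw [Finset.prod_congr rfl this]
      push_cast
      ring
    rw [hsplit]
    have hD := (Dprod_pos hζ n).ne'
    have hζ' := hζ.ne'
    field_simp

noncomputable def qstar (ζ : ℝ) (n : ℕ) : ℝ[X] :=
  ∑ k ∈ range (n+1), Polynomial.C (ccoef ζ n k) * X^k

lemma qstar_natDegree (ζ : ℝ) (n : ℕ) : (qstar ζ n).natDegree ≤ n := by
  refine le_trans (Polynomial.natDegree_sum_le _ _) ?_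
  rw [Finset.fold_max_le]
  refine ⟨Nat.zero_le n, fun k hk => ?_⟩
  refine le_trans (natDegree_C_mul_le _ _) ?_
  rw [natDegree_X_pow]
  exact Nat.lt_succ_iff.mp (Finset.mem_range.mp hk)

lemma qstar_eval_zero {ζ : ℝ} (hζ : 0 < ζ) (n : ℕ) : (qstar ζ n).eval 0 = 1 := by
  rw [qstar, Polynomial.eval_finset_sum]
  rw [Finset.sum_eq_single_of_mem 0 (Finset.mem_range.mpr (Nat.succ_pos n))]
  · simp [ccoef_zero hζ n]
  · intro k _ hk
    simp [zero_pow hk]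

lemma Jint_finset_sum (ζ : ℝ) (hζ : 0 < ζ) {ι : Type*} (s : Finset ι) (f : ι → ℝ[X]) :
    ∫ l in Ioc (0:ℝ) 1, (∑ i ∈ s, f i).eval l * (ζ * l ^ (ζ - 1))
      = ∑ i ∈ s, ∫ l in Ioc (0:ℝ) 1, (f i).eval l * (ζ * l ^ (ζ - 1)) := by
  have h : (fun l : ℝ => (∑ i ∈ s, f i).eval l * (ζ * l ^ (ζ - 1)))
      = fun l : ℝ => ∑ i ∈ s, (f i).eval l * (ζ * l ^ (ζ - 1)) := by
    funext l
    rw [Polynomial.eval_finset_sum, Finset.sum_mul]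
  rw [h, integral_finset_sum _ fun i _ => poly_integrableOn ζ hζ (f i)]

lemma Jint_CXpow (ζ : ℝ) (hζ : 0 < ζ) (a : ℝ) (m : ℕ) :
    ∫ l in Ioc (0:ℝ) 1, (Polynomial.C a * X^m).eval l * (ζ * l ^ (ζ - 1))
      = a * (ζ / (ζ + m)) := by
  rw [← mono_integral ζ hζ a m]
  simp

/-- orthogonality: qstar is orthogonal to polys vanishing at 0 of degree ≤ n -/
lemma Jint_ortho {ζ : ℝ} (hζ : 0 < ζ) (n : ℕ) (r : ℝ[X]) (hdeg : r.natDegree ≤ n)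
    (h0 : r.coeff 0 = 0) :
    ∫ l in Ioc (0:ℝ) 1, (qstar ζ n * r).eval l * (ζ * l ^ (ζ - 1)) = 0 := by
  have hr : r = ∑ j ∈ range (n+1), Polynomial.monomial j (r.coeff j) :=
    (Polynomial.as_sum_range' r (n+1) (Nat.lt_succ_of_le hdeg))
  rw [show qstar ζ n * r = ∑ j ∈ range (n+1), qstar ζ n * Polynomial.monomial j (r.coeff j) by
    rw [← Finset.mul_sum, ← hr]]
  rw [Jint_finset_sum ζ hζ]
  refine Finset.sum_eq_zero fun j hj => ?_
  rcases Nat.eq_zero_or_pos j with hj0 | hj1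
  · subst hj0
    rw [h0]
    simp
  · have hjn : j ≤ n := Nat.lt_succ_iff.mp (Finset.mem_range.mp hj)
    rw [show qstar ζ n * Polynomial.monomial j (r.coeff j)
        = ∑ k ∈ range (n+1), Polynomial.C (ccoef ζ n k * r.coeff j) * X^(k+j) by
      rw [qstar, Finset.sum_mul]
      refine Finset.sum_congr rfl fun k _ => ?_
      rw [← Polynomial.C_mul_X_pow_eq_monomial, pow_add]
      ring_nf
      rw [Polynomial.C_mul]
      ring]
    rw [Jint_finset_sum ζ hζ]
    have : ∀ k ∈ range (n+1),
        (∫ l in Ioc (0:ℝ) 1, (Polynomial.C (ccoef ζ n k * r.coeff j) * X^(k+j)).eval l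
          * (ζ * l ^ (ζ - 1)))
        = r.coeff j * (ccoef ζ n k * (ζ / (ζ + k + j))) := by
      intro k _
      rw [Jint_CXpow ζ hζ]
      push_cast
      rw [show ζ + ((k:ℝ) + (j:ℝ)) = ζ + k + j by ring]
      ring
    rw [Finset.sum_congr rfl this, ← Finset.mul_sum, key_ortho hζ n j hj1 hjn, mul_zero]

lemma Jint_qstar_sq {ζ : ℝ} (hζ : 0 < ζ) (n : ℕ) :
    ∫ l in Ioc (0:ℝ) 1, ((qstar ζ n)^2).eval l * (ζ * l ^ (ζ - 1))
      = ((n.factorial : ℝ) / Dprod ζ n)^2 := by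
  have hrr : (qstar ζ n)^2 = qstar ζ n * (qstar ζ n - 1) + qstar ζ n := by ring
  rw [hrr, Jint_add ζ hζ, Jint_ortho hζ n _ (le_trans (natDegree_sub_le _ _) (by
      simp [qstar_natDegree ζ n]))
    (by rw [Polynomial.coeff_sub, Polynomial.coeff_zero_eq_eval_zero, qstar_eval_zero hζ n]
        simp), zero_add]
  rw [qstar, Jint_finset_sum ζ hζ]
  have : ∀ k ∈ range (n+1),
      (∫ l in Ioc (0:ℝ) 1, (Polynomial.C (ccoef ζ n k) * X^k).eval l * (ζ * l ^ (ζ - 1)))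
      = ccoef ζ n k * (ζ / (ζ + k)) := fun k _ => Jint_CXpow ζ hζ _ _
  rw [Finset.sum_congr rfl this, key_value hζ n]

lemma gamma_prod (ζ : ℝ) (hζ : 0 < ζ) (n : ℕ) :
    Real.Gamma (ζ + n + 1) = Real.Gamma (ζ + 1) * Dprod ζ n := by
  induction n with
  | zero => simp [Dprod]
  | succ m ih =>
    have h1 : ζ + (m+1:ℕ) + 1 = (ζ + m + 1) + 1 := by push_cast; ring
    rw [h1, Real.Gamma_add_one (by positivity), ih]
    simp only [Dprod]
    rw [Finset.prod_range_succ]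
    ring

end CGAux

/-- Conjugate Gradients on the exact power-law spectral measure `ρ(dλ) = ζλ^{ζ-1}dλ` on
`[0,1]`: the `n`-step CG loss, i.e. the infimum of `(1/2)∫₀¹ q(λ)² ζλ^{ζ-1} dλ` over residual
polynomials `q` of degree at most `n` with `q(0)=1`, equals `Γ(ζ+1)²(n!)²/(2Γ(ζ+n+1)²)`. -/
theorem cg_exact_power_law_loss
    (ζ : ℝ) (hζ : 0 < ζ) (n : ℕ) :
    sInf {L : ℝ | ∃ q : Polynomial ℝ, q.natDegree ≤ n ∧ q.eval 0 = 1 ∧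
        L = (1/2) * ∫ l in Set.Ioc (0:ℝ) 1, (q.eval l) ^ 2 * (ζ * l ^ (ζ - 1))} =
      Real.Gamma (ζ + 1) ^ 2 * (n.factorial : ℝ) ^ 2 /
        (2 * Real.Gamma (ζ + n + 1) ^ 2) := by
  have hsq : ∀ q : ℝ[X], (∫ l in Set.Ioc (0:ℝ) 1, (q.eval l) ^ 2 * (ζ * l ^ (ζ - 1)))
      = ∫ l in Set.Ioc (0:ℝ) 1, (q^2).eval l * (ζ * l ^ (ζ - 1)) := by
    intro q; simp [eval_pow]
  have hle : IsLeast {L : ℝ | ∃ q : Polynomial ℝ, q.natDegree ≤ n ∧ q.eval 0 = 1 ∧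
        L = (1/2) * ∫ l in Set.Ioc (0:ℝ) 1, (q.eval l) ^ 2 * (ζ * l ^ (ζ - 1))}
      ((1/2) * ((n.factorial : ℝ) / Dprod ζ n)^2) := by
    constructor
    · exact ⟨qstar ζ n, qstar_natDegree ζ n, qstar_eval_zero hζ n, by
        rw [hsq, Jint_qstar_sq hζ n]⟩
    · rintro L ⟨q, hdeg, h0, rfl⟩
      rw [hsq]
      set r := q - qstar ζ n with hrdef
      have hr0 : r.coeff 0 = 0 := by
        rw [hrdef, Polynomial.coeff_sub, Polynomial.coeff_zero_eq_eval_zero,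
          Polynomial.coeff_zero_eq_eval_zero, h0, qstar_eval_zero hζ n, sub_self]
      have hrdeg : r.natDegree ≤ n :=
        le_trans (natDegree_sub_le _ _) (max_le hdeg (qstar_natDegree ζ n))
      have hq2 : q^2 = (qstar ζ n)^2 + (qstar ζ n * (r + r) + r^2) := by
        rw [hrdef]; ring
      have h2r0 : (r + r).coeff 0 = 0 := by
        rw [Polynomial.coeff_add, hr0, add_zero]
      have h2rdeg : (r + r).natDegree ≤ n :=
        le_trans (natDegree_add_le _ _) (by simp [hrdeg])
      rw [hq2, Jint_add ζ hζ, Jint_add ζ hζ, Jint_ortho hζ n _ h2rdeg h2r0, zero_add,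
        Jint_qstar_sq hζ n]
      have := Jint_nonneg_sq ζ hζ r
      linarith
  rw [hle.csInf_eq]
  rw [gamma_prod ζ hζ n]
  have hD := (Dprod_pos hζ n).ne'
  have hG := (Real.Gamma_pos_of_pos (by linarith : (0:ℝ) < ζ + 1)).ne'
  field_simp
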